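/- Let μ be a finite Borel measure on ℝⁿ with finite first moment, satisfying μ(ℝⁿ) ≤ 2 and μ({0}) ≥ 1. Then M(μ) = Z(μ), where Z(μ) = { ∫ x f(x) dμ : f measurable, 0 ≤ f ≤ 1 }. -/

import Mathlib

open MeasureTheory

noncomputable def metronoid {n : ℕ} (μ : Measure (EuclideanSpace ℝ (Fin n))) :
    Set (EuclideanSpace ℝ (Fin n)) :=
  {y | ∃ f : EuclideanSpace ℝ (Fin n) → ℝ, Measurable f ∧
    (∀ x, f x ∈ Set.Icc (0:ℝ) 1) ∧ (∫ x, f x ∂μ) = 1 ∧ (∫ x, f x • x ∂μ) = y}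

/-- `Z(μ)`: drop the normalization constraint. -/
noncomputable def zonoidSet {n : ℕ} (μ : Measure (EuclideanSpace ℝ (Fin n))) :
    Set (EuclideanSpace ℝ (Fin n)) :=
  {y | ∃ f : EuclideanSpace ℝ (Fin n) → ℝ, Measurable f ∧
    (∀ x, f x ∈ Set.Icc (0:ℝ) 1) ∧ (∫ x, f x • x ∂μ) = y}

theorem metronoid_eq_Z {n : ℕ} (μ : Measure (EuclideanSpace ℝ (Fin n)))
    [IsFiniteMeasure μ] (hmom : Integrable (fun x => ‖x‖) μ)
    (hmass : μ Set.univ ≤ 2) (hatom : 1 ≤ μ {0}) :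
    metronoid μ = zonoidSet μ := by
  apply Set.Subset.antisymm
  · rintro y ⟨f, hf, hfb, -, hfi⟩
    exact ⟨f, hf, hfb, hfi⟩
  · rintro y ⟨f, hf, hfb, hfi⟩
    have hμfin : μ Set.univ ≠ ⊤ := (measure_lt_top μ _).ne
    set m : ℝ := (μ {0}).toReal with hmdef
    have hm1 : (1:ℝ) ≤ m := by
      rw [hmdef, ← ENNReal.toReal_one]
      exact (ENNReal.toReal_le_toReal (by simp)
        ((lt_of_le_of_lt (measure_mono (Set.subset_univ _)) (measure_lt_top μ _)).ne)).mpr hatom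
    have hm0 : (0:ℝ) < m := lt_of_lt_of_le one_pos hm1
    have hμ2 : (μ Set.univ).toReal ≤ 2 := by
      have := (ENNReal.toReal_le_toReal hμfin (by norm_num : (2:ENNReal) ≠ ⊤)).mpr hmass
      simpa using this
    -- integrability facts
    have hIntf : Integrable f μ := by
      apply Integrable.mono' (integrable_const (1:ℝ)) hf.aestronglyMeasurable
      filter_upwards with x
      rw [Real.norm_eq_abs, abs_le]
      exact ⟨le_trans (by norm_num) (hfb x).1, (hfb x).2⟩
    have hInd : Integrable (Set.indicator ({0} : Set (EuclideanSpace ℝ (Fin n)))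
        (fun _ => (1:ℝ))) μ :=
      (integrable_const (1:ℝ)).indicator (measurableSet_singleton 0)
    have hIndInt : (∫ x, Set.indicator ({0} : Set (EuclideanSpace ℝ (Fin n)))
        (fun _ => (1:ℝ)) x ∂μ) = m := by
      rw [integral_indicator_const (1:ℝ) (measurableSet_singleton 0)]
      simp [hmdef, measureReal_def]
    set a : ℝ := ∫ x, f x ∂μ with hadef
    -- lower bound : f 0 * m ≤ a
    have hlow : f 0 * m ≤ a := by
      have hpt : ∀ x, f 0 * Set.indicator ({0} : Set (EuclideanSpace ℝ (Fin n)))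
          (fun _ => (1:ℝ)) x ≤ f x := by
        intro x
        by_cases hx : x = 0
        · simp [hx]
        · simpa [Set.indicator_of_notMem, hx] using (hfb x).1
      calc f 0 * m = ∫ x, f 0 * Set.indicator ({0} : Set (EuclideanSpace ℝ (Fin n)))
            (fun _ => (1:ℝ)) x ∂μ := by rw [integral_const_mul, hIndInt]
        _ ≤ a := integral_mono (hInd.const_mul _) hIntf hpt
    -- upper bound : a ≤ (μ univ).toReal - (1 - f 0) * m
    have hup : a ≤ (μ Set.univ).toReal - (1 - f 0) * m := by
      have hpt : ∀ x, f x ≤ 1 - (1 - f 0) * Set.indicator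
          ({0} : Set (EuclideanSpace ℝ (Fin n))) (fun _ => (1:ℝ)) x := by
        intro x
        by_cases hx : x = 0
        · simp [hx]
        · simpa [Set.indicator_of_notMem, hx] using (hfb x).2
      have hInt2 : Integrable (fun x => 1 - (1 - f 0) * Set.indicator
          ({0} : Set (EuclideanSpace ℝ (Fin n))) (fun _ => (1:ℝ)) x) μ :=
        (integrable_const (1:ℝ)).sub (hInd.const_mul _)
      calc a ≤ ∫ x, (1 - (1 - f 0) * Set.indicator
            ({0} : Set (EuclideanSpace ℝ (Fin n))) (fun _ => (1:ℝ)) x) ∂μ :=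
          integral_mono hIntf hInt2 hpt
        _ = (μ Set.univ).toReal - (1 - f 0) * m := by
          rw [integral_sub (integrable_const _) (hInd.const_mul _),
            integral_const_mul, hIndInt, integral_const]
          simp [measureReal_def]
    -- define the new value at the atom
    set t : ℝ := (f 0 * m + (1 - a)) / m with htdef
    have ht0 : 0 ≤ t := by
      apply div_nonneg _ hm0.le
      nlinarith [hup, hμ2, hm1]
    have ht1 : t ≤ 1 := by
      rw [htdef, div_le_one hm0]
      nlinarith [hlow, hm1]
    have hts : (t - f 0) * m = 1 - a := by
      rw [htdef, sub_mul, div_mul_cancel₀ _ hm0.ne']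
      ring
    -- the modified function
    set g : EuclideanSpace ℝ (Fin n) → ℝ := fun x => f x + (t - f 0) *
      Set.indicator ({0} : Set (EuclideanSpace ℝ (Fin n))) (fun _ => (1:ℝ)) x with hgdef
    refine ⟨g, ?_, ?_, ?_, ?_⟩
    · exact hf.add ((measurable_const.indicator (measurableSet_singleton 0)).const_mul _)
    · intro x
      by_cases hx : x = 0
      · have : g x = t := by simp [hgdef, hx]
        rw [this]; exact ⟨ht0, ht1⟩
      · have : g x = f x := by simp [hgdef, Set.indicator_of_notMem, hx]
        rw [this]; exact hfb x
    · rw [hgdef]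
      rw [integral_add hIntf (hInd.const_mul _), integral_const_mul, hIndInt, hts]
      simp [hadef]
    · rw [← hfi]
      apply integral_congr_ae
      filter_upwards with x
      by_cases hx : x = 0
      · simp [hgdef, hx]
      · simp [hgdef, Set.indicator_of_notMem, hx]
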